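/- Let T : [0,1] → [0,1] be a piecewise expanding map preserving an ergodic measure μ absolutely continuous with respect to Lebesgue, satisfying the BV multiple-mixing inequality of the previous statement, with balls E_ρ = B(x, ρ) around a Diophantine point x, σ(ρ) = μ(E_ρ) satisfying c₁ρ ≤ σ(ρ) ≤ c₂ρ. Set ρ_n = n^{-1}(ln n)^{-δ}. Then for s(n) = R ln n with R sufficiently large: for any 0 < k₁ < ... < k_r ≤ n with all gaps ≥ R ln n, C^{-1}σ(ρ_n)^r ≤ μ(⋂_{j=1}^r T^{-k_j}B(x, ρ_n)) ≤ C σ(ρ_n)^r. -/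

import Mathlib

open MeasureTheory Metric


lemma abs_ind_sub_le (a b p q : ℝ) (hpq : q ≤ p) :
    |(Set.Ioo a b).indicator (1:ℝ→ℝ) p - (Set.Ioo a b).indicator 1 q|
      ≤ ((Set.Ioi a).indicator (1:ℝ→ℝ) p - (Set.Ioi a).indicator 1 q)
        + ((Set.Ici b).indicator (1:ℝ→ℝ) p - (Set.Ici b).indicator 1 q) := by
  simp only [Set.indicator_apply, Set.mem_Ioo, Set.mem_Ioi, Set.mem_Ici, Pi.one_apply]
  split_ifs <;> (try push_neg at *) <;> simp_all <;> try linarith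

lemma evar_ind_Ioo_le (a b : ℝ) (s : Set ℝ) :
    eVariationOn ((Set.Ioo a b).indicator (1:ℝ→ℝ)) s ≤ 2 := by
  rw [eVariationOn]
  refine iSup_le ?_
  rintro ⟨m, u, hu, -⟩
  set f := (Set.Ioo a b).indicator (1:ℝ→ℝ) with hf
  set g := (Set.Ioi a).indicator (1:ℝ→ℝ) with hg
  set h := (Set.Ici b).indicator (1:ℝ→ℝ) with hh
  have key : ∀ i, edist (f (u (i+1))) (f (u i))
      ≤ ENNReal.ofReal ((g (u (i+1)) - g (u i)) + (h (u (i+1)) - h (u i))) := by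
    intro i
    rw [edist_dist, Real.dist_eq]
    exact ENNReal.ofReal_le_ofReal (abs_ind_sub_le a b _ _ (hu (Nat.le_succ i)))
  calc ∑ i ∈ Finset.range m, edist (f (u (i + 1))) (f (u i))
      ≤ ∑ i ∈ Finset.range m,
          ENNReal.ofReal ((g (u (i+1)) - g (u i)) + (h (u (i+1)) - h (u i))) :=
        Finset.sum_le_sum fun i _ => key i
    _ = ENNReal.ofReal (∑ i ∈ Finset.range m,
          ((g (u (i+1)) - g (u i)) + (h (u (i+1)) - h (u i)))) := by
        rw [ENNReal.ofReal_sum_of_nonneg]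
        intro i _
        have h1 : g (u i) ≤ g (u (i+1)) := by
          have huu : u i ≤ u (i+1) := hu (Nat.le_succ i)
          simp only [hg, Set.indicator_apply, Set.mem_Ioi, Pi.one_apply]
          split_ifs <;> linarith
        have h2 : h (u i) ≤ h (u (i+1)) := by
          have huu : u i ≤ u (i+1) := hu (Nat.le_succ i)
          simp only [hh, Set.indicator_apply, Set.mem_Ici, Pi.one_apply]
          split_ifs <;> linarith
        linarith
    _ ≤ 2 := by
        rw [Finset.sum_add_distrib, Finset.sum_range_sub (fun i => g (u i)),
          Finset.sum_range_sub (fun i => h (u i))]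
        have b1 : ∀ t, (0:ℝ) ≤ g t ∧ g t ≤ 1 := by
          intro t; simp only [hg, Set.indicator_apply, Pi.one_apply]; split_ifs <;> norm_num
        have b2 : ∀ t, (0:ℝ) ≤ h t ∧ h t ≤ 1 := by
          intro t; simp only [hh, Set.indicator_apply, Pi.one_apply]; split_ifs <;> norm_num
        have : (g (u m) - g (u 0)) + (h (u m) - h (u 0)) ≤ 2 := by
          have := b1 (u m); have := b1 (u 0); have := b2 (u m); have := b2 (u 0); linarith
        calc ENNReal.ofReal _ ≤ ENNReal.ofReal 2 := ENNReal.ofReal_le_ofReal this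
          _ = 2 := by norm_num

lemma key_est (Cm θ c₁ c₂ δ R σ V : ℝ) (n g : ℕ)
    (hCm : 0 < Cm) (hθ0 : 0 < θ) (hθ1 : θ < 1) (hc₁ : 0 < c₁) (hc₂ : 0 < c₂) (hδ : 0 < δ)
    (hR : (δ + 3) / (-Real.log θ) ≤ R)
    (hn3 : 3 ≤ n) (hnc : 2 * Cm * (c₂ + 2) / c₁ ≤ (n:ℝ))
    (hσl : c₁ * ((n:ℝ)⁻¹ * Real.log n ^ (-δ)) ≤ σ) (hσc₂ : σ ≤ c₂)
    (hV0 : 0 ≤ V) (hV2 : V ≤ 2)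
    (hg : R * Real.log n ≤ (g:ℝ)) :
    Cm * (σ + V) * θ ^ g ≤ σ / 2 := by
  have hθlog : Real.log θ < 0 := Real.log_neg hθ0 hθ1
  have hn0' : 0 < n := by omega
  have hn0 : (0:ℝ) < n := by exact_mod_cast hn0'
  have hn1 : (1:ℝ) ≤ n := by exact_mod_cast hn0'
  have hlog1 : (1:ℝ) ≤ Real.log n := by
    rw [Real.le_log_iff_exp_le hn0]
    calc Real.exp 1 ≤ 2.7182818286 := Real.exp_one_lt_d9.le
      _ ≤ 3 := by norm_num
      _ ≤ n := by exact_mod_cast hn3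
  have hlogpos : (0:ℝ) < Real.log n := lt_of_lt_of_le one_pos hlog1
  have hρlb : Real.exp (-(1+δ) * Real.log n) ≤ (n:ℝ)⁻¹ * Real.log n ^ (-δ) := by
    have hloglog : Real.log (Real.log n) ≤ Real.log n :=
      Real.log_le_log hlogpos (by linarith [Real.log_le_sub_one_of_pos hn0,
        Real.log_le_sub_one_of_pos hlogpos])
    have h1 : Real.log n ^ (-δ) = Real.exp (Real.log (Real.log n) * (-δ)) :=
      Real.rpow_def_of_pos hlogpos _
    have h2 : (n:ℝ)⁻¹ = Real.exp (-Real.log n) := by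
      rw [Real.exp_neg, Real.exp_log hn0]
    rw [h1, h2, ← Real.exp_add]
    apply Real.exp_le_exp.mpr
    linarith [mul_le_mul_of_nonneg_left hloglog hδ.le]
  have hRθ : R * Real.log θ ≤ -(δ + 3) := by
    rw [div_le_iff₀ (by linarith : (0:ℝ) < -Real.log θ)] at hR
    linarith
  have hθg : θ ^ g ≤ Real.exp (-(δ+3) * Real.log n) := by
    have e1 : θ ^ g = Real.exp ((g:ℝ) * Real.log θ) := by
      rw [Real.exp_nat_mul, Real.exp_log hθ0]
    rw [e1]
    apply Real.exp_le_exp.mpr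
    have h1 : (g:ℝ) * Real.log θ ≤ (R * Real.log n) * Real.log θ :=
      mul_le_mul_of_nonpos_right hg hθlog.le
    refine h1.trans ?_
    linarith [mul_le_mul_of_nonneg_right hRθ hlogpos.le]
  have hsplit : Real.exp (-(δ+3) * Real.log n)
      = Real.exp (-(1+δ) * Real.log n) * Real.exp (-2 * Real.log n) := by
    rw [← Real.exp_add]; ring_nf
  have hexp2 : Real.exp (-2 * Real.log n) = ((n:ℝ) * n)⁻¹ := by
    have h3 : (-2 : ℝ) * Real.log n = -(Real.log n + Real.log n) := by ring
    rw [h3, Real.exp_neg, Real.exp_add, Real.exp_log hn0]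
  have hσ0 : 0 ≤ σ := by
    have h5 : 0 < (n:ℝ)⁻¹ * Real.log n ^ (-δ) := by
      have := Real.rpow_pos_of_pos hlogpos (-δ); positivity
    nlinarith [mul_pos hc₁ h5]
  have hnnpos : (0:ℝ) < (n:ℝ) * n := by positivity
  have h3 : Cm * (c₂ + 2) * ((n:ℝ)*n)⁻¹ ≤ c₁ / 2 := by
    rw [← div_eq_mul_inv, div_le_iff₀ hnnpos]
    rw [div_le_iff₀ hc₁] at hnc
    have h4 : (↑n * c₁) * 1 ≤ (↑n * c₁) * ↑n := mul_le_mul_of_nonneg_left hn1 (by positivity)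
    linarith [h4]
  have hmain : Cm * (c₂ + 2) * (((n:ℝ)*n)⁻¹ * Real.exp (-(1+δ) * Real.log n))
      ≤ c₁ / 2 * ((n:ℝ)⁻¹ * Real.log n ^ (-δ)) := by
    calc Cm * (c₂ + 2) * (((n:ℝ)*n)⁻¹ * Real.exp (-(1+δ) * Real.log n))
        = (Cm * (c₂ + 2) * ((n:ℝ)*n)⁻¹) * Real.exp (-(1+δ) * Real.log n) := by ring
      _ ≤ (c₁ / 2) * ((n:ℝ)⁻¹ * Real.log n ^ (-δ)) :=
          mul_le_mul h3 hρlb (Real.exp_pos _).le (by linarith)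
  have hθg0 : (0:ℝ) ≤ θ ^ g := by positivity
  calc Cm * (σ + V) * θ ^ g ≤ Cm * (c₂ + 2) * θ ^ g :=
        mul_le_mul_of_nonneg_right
          (mul_le_mul_of_nonneg_left (by linarith) hCm.le) hθg0
    _ ≤ Cm * (c₂ + 2) * (Real.exp (-(1+δ) * Real.log n) * (((n:ℝ)*n)⁻¹)) := by
        rw [← hexp2]
        refine mul_le_mul_of_nonneg_left ?_ (by positivity)
        rw [← hsplit]; exact hθg
    _ = Cm * (c₂ + 2) * (((n:ℝ)*n)⁻¹ * Real.exp (-(1+δ) * Real.log n)) := by ring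
    _ ≤ c₁ / 2 * ((n:ℝ)⁻¹ * Real.log n ^ (-δ)) := hmain
    _ ≤ σ / 2 := by linarith

lemma lower_alg (m : ℕ) (σ : ℝ) (hσ : 0 ≤ σ) :
    ((2:ℝ)^(m+1))⁻¹ * σ^(m+1) ≤ (σ/2)^m * σ := by
  rw [div_pow, pow_succ]
  have h1 : ((2:ℝ)^(m+1))⁻¹ ≤ ((2:ℝ)^m)⁻¹ := by
    gcongr
    · norm_num
    · exact Nat.le_succ m
  calc ((2:ℝ)^(m+1))⁻¹ * (σ^m*σ) ≤ ((2:ℝ)^m)⁻¹ * (σ^m*σ) :=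
        mul_le_mul_of_nonneg_right h1 (by positivity)
    _ = σ^m/2^m * σ := by ring

lemma upper_alg (m : ℕ) (σ : ℝ) (hσ : 0 ≤ σ) :
    (2*σ)^m * σ ≤ 2^(m+1) * σ^(m+1) := by
  rw [mul_pow, pow_succ, pow_succ]
  have h := mul_nonneg (mul_nonneg (pow_nonneg (by norm_num : (0:ℝ) ≤ 2) m)
    (pow_nonneg hσ m)) hσ
  nlinarith

/-- Condition (GM1)_r for balls around a Diophantine point of a piecewise expanding map:
given the BV multiple-mixing inequality, for targets `B(x, ρ_n)` with
`ρ_n = n^{-1}(ln n)^{-δ}`, separation `s(n) = R ln n` with `R` large gives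
`C⁻¹ σ(ρ_n)^r ≤ μ(⋂_j T^{-k_j} B(x,ρ_n)) ≤ C σ(ρ_n)^r`. -/
theorem stmt17 (μ : Measure ℝ) [IsProbabilityMeasure μ]
    (T : ℝ → ℝ) (hT : MeasurePreserving T μ μ)
    (Cm θ : ℝ) (hCm : 0 < Cm) (hθ0 : 0 < θ) (hθ1 : θ < 1)
    -- BV multiple-mixing inequality (conclusion of the previous statement)
    (hmmix : ∀ (q : ℕ), 1 ≤ q → ∀ (ψ : ℕ → ℝ → ℝ),
      (∀ j x, 0 ≤ ψ j x) →
      (∀ j, eVariationOn (ψ j) (Set.Icc 0 1) ≠ ⊤) →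
      ∀ (k : ℕ → ℕ), StrictMono k →
      ((∏ j ∈ Finset.range (q - 1),
          ((∫ x, |ψ j x| ∂μ) -
            Cm * ((∫ x, |ψ j x| ∂μ) + (eVariationOn (ψ j) (Set.Icc 0 1)).toReal) *
              θ ^ (k (j + 1) - k j))) * (∫ x, |ψ (q - 1) x| ∂μ) ≤
        ∫ x, ∏ j ∈ Finset.range q, ψ j (T^[k j] x) ∂μ) ∧
      ((∫ x, ∏ j ∈ Finset.range q, ψ j (T^[k j] x) ∂μ) ≤
        (∏ j ∈ Finset.range (q - 1),
          ((∫ x, |ψ j x| ∂μ) +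
            Cm * ((∫ x, |ψ j x| ∂μ) + (eVariationOn (ψ j) (Set.Icc 0 1)).toReal) *
              θ ^ (k (j + 1) - k j))) * (∫ x, |ψ (q - 1) x| ∂μ)))
    (x : ℝ)
    -- `x` is a Diophantine point
    (hdio : ∃ ε > (0 : ℝ), ∃ ρ₀ > (0 : ℝ), ∀ ρ : ℝ, 0 < ρ → ρ ≤ ρ₀ →
      ∀ k : ℕ, 0 < k → (k : ℝ) ≤ ε * |Real.log ρ| →
        T^[k] ⁻¹' ball x ρ ∩ ball x ρ = ∅)
    (c₁ c₂ : ℝ) (hc₁ : 0 < c₁) (hc₂ : 0 < c₂)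
    -- ball measure comparable to radius
    (hball : ∀ ρ : ℝ, 0 < ρ → ρ < 1 →
      c₁ * ρ ≤ (μ (ball x ρ)).toReal ∧ (μ (ball x ρ)).toReal ≤ c₂ * ρ)
    (δ : ℝ) (hδ : 0 < δ) (r : ℕ) (hr : 1 ≤ r) :
    ∃ R₀ > (0 : ℝ), ∀ R : ℝ, R₀ ≤ R → ∃ C > (0 : ℝ), ∃ n₀ : ℕ, ∀ n : ℕ, n₀ ≤ n →
      ∀ k : ℕ → ℕ, k 0 = 0 → (∀ j < r, k j < k (j + 1)) → k r ≤ n →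
        (∀ j < r, R * Real.log n ≤ (k (j + 1) : ℝ) - (k j : ℝ)) →
        C⁻¹ * ((μ (ball x ((n : ℝ)⁻¹ * Real.log n ^ (-δ)))).toReal) ^ r ≤
            (μ (⋂ j ∈ Finset.Icc 1 r,
              T^[k j] ⁻¹' ball x ((n : ℝ)⁻¹ * Real.log n ^ (-δ)))).toReal ∧
          (μ (⋂ j ∈ Finset.Icc 1 r,
              T^[k j] ⁻¹' ball x ((n : ℝ)⁻¹ * Real.log n ^ (-δ)))).toReal ≤
            C * ((μ (ball x ((n : ℝ)⁻¹ * Real.log n ^ (-δ)))).toReal) ^ r := by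
  clear hdio
  obtain ⟨m, rfl⟩ : ∃ m, r = m + 1 := ⟨r - 1, by omega⟩
  have hθlog : Real.log θ < 0 := Real.log_neg hθ0 hθ1
  refine ⟨(δ + 3) / (-Real.log θ), div_pos (by linarith) (by linarith), ?_⟩
  intro R hR
  refine ⟨2 ^ (m + 1), by positivity, max 3 (Nat.ceil (2 * Cm * (c₂ + 2) / c₁) + 1), ?_⟩
  intro n hn k hk0 hk hkr hgap
  have hn3 : 3 ≤ n := le_trans (le_max_left _ _) hn
  have hn0' : 0 < n := by omega
  have hn0 : (0:ℝ) < n := by exact_mod_cast hn0'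
  have hnc : 2 * Cm * (c₂ + 2) / c₁ ≤ (n:ℝ) := by
    refine le_trans (Nat.le_ceil _) ?_
    have h6 : Nat.ceil (2 * Cm * (c₂ + 2) / c₁) ≤ n :=
      le_trans (Nat.le_of_succ_le (le_max_right 3 _)) hn
    exact_mod_cast h6
  have hlog1 : (1:ℝ) ≤ Real.log n := by
    rw [Real.le_log_iff_exp_le hn0]
    calc Real.exp 1 ≤ 2.7182818286 := Real.exp_one_lt_d9.le
      _ ≤ 3 := by norm_num
      _ ≤ n := by exact_mod_cast hn3
  have hlogpos : (0:ℝ) < Real.log n := lt_of_lt_of_le one_pos hlog1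
  set ρ : ℝ := (n:ℝ)⁻¹ * Real.log n ^ (-δ) with hρdef
  have hrpow_pos : (0:ℝ) < Real.log n ^ (-δ) := Real.rpow_pos_of_pos hlogpos _
  have hrpow_le1 : Real.log n ^ (-δ) ≤ 1 :=
    Real.rpow_le_one_of_one_le_of_nonpos hlog1 (by linarith)
  have hρpos : 0 < ρ := mul_pos (inv_pos.mpr hn0) hrpow_pos
  have hρlt1 : ρ < 1 := by
    have h1 : (n:ℝ)⁻¹ ≤ 1/3 := by
      rw [inv_le_comm₀ hn0 (by norm_num)]
      norm_num
      exact_mod_cast hn3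
    calc ρ ≤ (n:ℝ)⁻¹ * 1 := mul_le_mul_of_nonneg_left hrpow_le1 (by positivity)
      _ ≤ 1/3 := by rw [mul_one]; exact h1
      _ < 1 := by norm_num
  obtain ⟨hσl, hσu⟩ := hball ρ hρpos hρlt1
  set σ := (μ (ball x ρ)).toReal with hσdef
  have hσ0 : 0 ≤ σ := ENNReal.toReal_nonneg
  have hσc₂ : σ ≤ c₂ := hσu.trans (mul_le_of_le_one_right hc₂.le hρlt1.le)
  -- the observable
  set ψ : ℝ → ℝ := (ball x ρ).indicator 1 with hψdef
  have hψnn : ∀ y, 0 ≤ ψ y := fun y => Set.indicator_nonneg (fun _ _ => zero_le_one) y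
  have hψvar : eVariationOn ψ (Set.Icc 0 1) ≤ 2 := by
    rw [hψdef, Real.ball_eq_Ioo]
    exact evar_ind_Ioo_le _ _ _
  have hψvar_ne : eVariationOn ψ (Set.Icc 0 1) ≠ ⊤ :=
    ne_top_of_le_ne_top (by norm_num) hψvar
  set V := (eVariationOn ψ (Set.Icc 0 1)).toReal with hVdef
  have hV0 : 0 ≤ V := ENNReal.toReal_nonneg
  have hV2 : V ≤ 2 := by
    have := ENNReal.toReal_mono (by norm_num : (2:ENNReal) ≠ ⊤) hψvar
    simpa using this
  have key : ∀ g : ℕ, R * Real.log n ≤ (g:ℝ) → Cm * (σ + V) * θ ^ g ≤ σ / 2 :=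
    fun g hg => key_est Cm θ c₁ c₂ δ R σ V n g hCm hθ0 hθ1 hc₁ hc₂ hδ hR hn3 hnc
      hσl hσc₂ hV0 hV2 hg
  -- the time sequence
  set k' : ℕ → ℕ := fun j => if j + 1 ≤ m + 1 then k (j+1) else k (m+1) + (j + 1 - (m+1))
    with hk'def
  have hk'lt : ∀ j, j + 1 ≤ m + 1 → k' j = k (j+1) := fun j h => if_pos h
  have hk'mono : StrictMono k' := by
    apply strictMono_nat_of_lt_succ
    intro j
    by_cases h1 : j + 1 + 1 ≤ m + 1
    · rw [hk'lt j (by omega), hk'lt (j+1) h1]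
      exact hk (j+1) (by omega)
    · by_cases h2 : j + 1 ≤ m + 1
      · rw [hk'lt j h2]
        have e1 : k' (j+1) = k (m+1) + (j + 1 + 1 - (m+1)) := if_neg (by omega)
        have e2 : j + 1 = m + 1 := by omega
        rw [e1, e2]
        omega
      · have e1 : k' j = k (m+1) + (j + 1 - (m+1)) := if_neg h2
        have e2 : k' (j+1) = k (m+1) + (j + 1 + 1 - (m+1)) := if_neg (by omega)
        rw [e1, e2]
        omega
  have hmix := hmmix (m+1) (by omega) (fun _ y => ψ y) (fun _ y => hψnn y)
    (fun _ => hψvar_ne) k' hk'mono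
  clear hmmix
  simp only [Nat.add_sub_cancel] at hmix
  -- integral identities
  have hint1 : (∫ y, |ψ y| ∂μ) = σ := by
    have h1 : (fun y => |ψ y|) = ψ := funext fun y => abs_of_nonneg (hψnn y)
    rw [h1, hψdef, hσdef]
    exact integral_indicator_one measurableSet_ball
  set S := ⋂ j ∈ Finset.Icc 1 (m+1), T^[k j] ⁻¹' ball x ρ with hSdef
  have hSm : MeasurableSet S := by
    rw [hSdef]
    refine MeasurableSet.biInter (Set.to_countable _) (fun j _ => ?_)
    exact measurableSet_ball.preimage (hT.measurable.iterate (k j))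
  have hmem : ∀ y, y ∈ S ↔ ∀ j, 1 ≤ j → j ≤ m + 1 → T^[k j] y ∈ ball x ρ := by
    intro y
    rw [hSdef]
    simp only [Set.mem_iInter, Finset.mem_Icc, Finset.mem_coe, and_imp]
    tauto
  have hprodeq : ∀ y, (∏ j ∈ Finset.range (m+1), ψ (T^[k' j] y)) = S.indicator 1 y := by
    intro y
    by_cases hy : y ∈ S
    · rw [Set.indicator_of_mem hy]
      simp only [Pi.one_apply]
      refine Finset.prod_eq_one (fun j hj => ?_)
      have hjr := Finset.mem_range.mp hj
      have hin : T^[k' j] y ∈ ball x ρ := by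
        rw [hk'lt j (by omega)]
        exact (hmem y).1 hy (j+1) (by omega) (by omega)
      rw [hψdef]
      exact Set.indicator_of_mem hin 1
    · rw [Set.indicator_of_notMem hy]
      have hex : ∃ j, 1 ≤ j ∧ j ≤ m + 1 ∧ T^[k j] y ∉ ball x ρ := by
        by_contra hcon
        push_neg at hcon
        exact hy ((hmem y).2 (fun j h1 h2 => hcon j h1 h2))
      obtain ⟨j, hj1, hjr, hjB⟩ := hex
      refine Finset.prod_eq_zero (Finset.mem_range.mpr (show j - 1 < m + 1 by omega)) ?_
      have e : k' (j-1) = k j := by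
        rw [hk'lt (j-1) (by omega)]
        congr 1
        omega
      rw [e, hψdef]
      exact Set.indicator_of_notMem hjB 1
  have hint2 : (∫ y, ∏ j ∈ Finset.range (m+1), ψ (T^[k' j] y) ∂μ) = (μ S).toReal := by
    calc (∫ y, ∏ j ∈ Finset.range (m+1), ψ (T^[k' j] y) ∂μ)
        = ∫ y, S.indicator 1 y ∂μ := by
          congr 1
          exact funext hprodeq
      _ = (μ S).toReal := integral_indicator_one hSm
  rw [hint1, hint2] at hmix
  obtain ⟨hlow, hup⟩ := hmix
  -- the per-factor estimates
  have hEval : ∀ j ∈ Finset.range m, Cm * (σ + V) * θ ^ (k' (j+1) - k' j) ≤ σ / 2 := by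
    intro j hj
    have hjm := Finset.mem_range.mp hj
    apply key
    have e1 : k' j = k (j+1) := hk'lt j (by omega)
    have e2 : k' (j+1) = k (j+2) := hk'lt (j+1) (by omega)
    rw [e1, e2]
    have hle : k (j+1) ≤ k (j+2) := (hk (j+1) (by omega)).le
    rw [Nat.cast_sub hle]
    exact hgap (j+1) (by omega)
  have hEpos : ∀ j : ℕ, 0 ≤ Cm * (σ + V) * θ ^ (k' (j+1) - k' j) := fun j =>
    mul_nonneg (mul_nonneg hCm.le (by linarith)) (pow_nonneg hθ0.le _)
  constructor
  · -- lower bound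
    calc ((2:ℝ) ^ (m+1))⁻¹ * σ ^ (m+1)
        ≤ (σ/2) ^ m * σ := lower_alg m σ hσ0
      _ ≤ (∏ j ∈ Finset.range m,
            (σ - Cm * (σ + V) * θ ^ (k' (j+1) - k' j))) * σ := by
          refine mul_le_mul_of_nonneg_right ?_ hσ0
          have hconst : (σ/2) ^ m = ∏ _j ∈ Finset.range m, (σ/2) := by
            rw [Finset.prod_const, Finset.card_range]
          rw [hconst]
          refine Finset.prod_le_prod (fun j hj => by positivity) (fun j hj => ?_)
          have := hEval j hj
          linarith
      _ ≤ (μ S).toReal := hlow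
  · -- upper bound
    calc (μ S).toReal
        ≤ (∏ j ∈ Finset.range m,
            (σ + Cm * (σ + V) * θ ^ (k' (j+1) - k' j))) * σ := hup
      _ ≤ (2*σ) ^ m * σ := by
          refine mul_le_mul_of_nonneg_right ?_ hσ0
          have hconst : (2*σ) ^ m = ∏ _j ∈ Finset.range m, (2*σ) := by
            rw [Finset.prod_const, Finset.card_range]
          rw [hconst]
          refine Finset.prod_le_prod (fun j hj => add_nonneg hσ0 (hEpos j)) (fun j hj => ?_)
          have := hEval j hj
          linarith
      _ ≤ 2 ^ (m+1) * σ ^ (m+1) := upper_alg m σ hσ0
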